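/- arXiv:2405.07705 — 16 statements merged into one kernel-verified Lean document; each statement's English description precedes it below -/
import Mathlib

section
/- Let (X,d) be a metric space and C a bounded nonempty subset of X. If f : X → ℝ is a strictly positive function, then the f-enlargement B_d(C,f) = ⋃_{x∈C} B_d(x, f(x)) is either a bounded set or equal to all of X. -/
open Metric

theorem fEnlargement_of_bounded_bounded_or_univ {X : Type*} [MetricSpace X]
    (C : Set X) (hC : C.Nonempty) (hCb : Bornology.IsBounded C)
    (f : X → ℝ) (hf : ∀ x, 0 < f x) :
    Bornology.IsBounded (⋃ x ∈ C, ball x (f x)) ∨ (⋃ x ∈ C, ball x (f x)) = Set.univ := by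
  obtain ⟨x₀, hx₀⟩ := hC
  obtain ⟨r, hr⟩ := hCb.subset_closedBall x₀
  by_cases h : ∃ M : ℝ, ∀ x ∈ C, f x ≤ M
  · left
    obtain ⟨M, hM⟩ := h
    refine (isBounded_closedBall (x := x₀) (r := r + M)).subset ?_
    rintro y hy
    simp only [Set.mem_iUnion] at hy
    obtain ⟨x, hxC, hyx⟩ := hy
    have h1 : dist x x₀ ≤ r := hr hxC
    have h2 : dist y x < f x := mem_ball.mp hyx
    have := hM x hxC
    calc dist y x₀ ≤ dist y x + dist x x₀ := dist_triangle _ _ _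
      _ ≤ r + M := by linarith
  · right
    push_neg at h
    ext y
    simp only [Set.mem_iUnion, Set.mem_univ, iff_true]
    obtain ⟨x, hxC, hx⟩ := h (dist y x₀ + r)
    refine ⟨x, hxC, mem_ball.mpr ?_⟩
    have h1 : dist x x₀ ≤ r := hr hxC
    calc dist y x ≤ dist y x₀ + dist x₀ x := dist_triangle _ _ _
      _ ≤ dist y x₀ + r := by rw [dist_comm x₀ x]; linarith
      _ < f x := hx
end

section
/- Let (X,d) be a metric space and S a bornology on X. If a net (A_λ) of nonempty closed subsets converges to a nonempty closed set A in the topology τ⁺_{S,d} (i.e., for every S₀ ∈ S and ε > 0, eventually d(x,A) − d(x,A_λ) < ε for all x ∈ S₀), then (A_λ) converges to A in the upper gap topology G⁺_{S,d} (i.e., for every S₀ ∈ S with D_d(S₀,A) > α, eventually D_d(S₀,A_λ) > α). -/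
open Metric Filter

/-- The gap functional `D_d(S,A) = inf {d(s,a) : s ∈ S, a ∈ A}`. -/
noncomputable def gapD {X : Type*} [MetricSpace X] (S A : Set X) : ℝ :=
  sInf (Set.image2 dist S A)

theorem tauPlus_implies_gapPlus {X : Type*} [MetricSpace X]
    (B : Set (Set X))
    (hne : ∀ s ∈ B, s.Nonempty)
    (hcov : ∀ x : X, ∃ s ∈ B, x ∈ s)
    (hered : ∀ s ∈ B, ∀ t, t ⊆ s → t.Nonempty → t ∈ B)
    (hunion : ∀ s ∈ B, ∀ t ∈ B, s ∪ t ∈ B)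
    {ι : Type*} (l : Filter ι) (An : ι → Set X) (A : Set X)
    (hAnc : ∀ i, IsClosed (An i)) (hAnne : ∀ i, (An i).Nonempty)
    (hAc : IsClosed A) (hAne : A.Nonempty)
    (htau : ∀ S₀ ∈ B, ∀ ε > 0, ∀ᶠ i in l, ∀ x ∈ S₀,
      infDist x A - infDist x (An i) < ε) :
    ∀ S₀ ∈ B, ∀ α : ℝ, α < gapD S₀ A → ∀ᶠ i in l, α < gapD S₀ (An i) := by
  intro S₀ hS₀ α hα
  set δ : ℝ := (gapD S₀ A - α) / 2 with hδ
  have hδpos : 0 < δ := by rw [hδ]; linarith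
  filter_upwards [htau S₀ hS₀ δ hδpos] with i hi
  have hlb : ∀ x ∈ S₀, α + δ ≤ infDist x (An i) := by
    intro x hx
    have h1 : gapD S₀ A ≤ infDist x A := by
      by_contra h
      push_neg at h
      obtain ⟨y, hy, hxy⟩ := (infDist_lt_iff hAne).1 h
      have : gapD S₀ A ≤ dist x y :=
        csInf_le ⟨0, by rintro r ⟨a, _, b, _, rfl⟩; exact dist_nonneg⟩
          (Set.mem_image2_of_mem hx hy)
      linarith
    have h2 := hi x hx
    simp only [hδ] at *
    linarith
  have hmem : (Set.image2 dist S₀ (An i)).Nonempty :=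
    (hne S₀ hS₀).image2 (hAnne i)
  have : α + δ ≤ gapD S₀ (An i) := by
    apply le_csInf hmem
    rintro r ⟨a, ha, b, hb, rfl⟩
    exact (hlb a ha).trans (infDist_le_dist_of_mem hb)
  linarith
end

section
/- Let (X,d) be a metric space and S a bornology on X. If a net (A_λ) of nonempty closed subsets G⁺_{S,d}-converges to a nonempty closed set A, then (A_λ) S⁺-converges to A; that is, for every S₀ ∈ S and ε > 0, eventually A_λ ∩ S₀ ⊆ B_d(A, ε). -/
open Metric Filter

theorem gapPlus_implies_bornPlus {X : Type*} [MetricSpace X]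
    (B : Set (Set X))
    (hne : ∀ s ∈ B, s.Nonempty)
    (hcov : ∀ x : X, ∃ s ∈ B, x ∈ s)
    (hered : ∀ s ∈ B, ∀ t, t ⊆ s → t.Nonempty → t ∈ B)
    (hunion : ∀ s ∈ B, ∀ t ∈ B, s ∪ t ∈ B)
    {ι : Type*} (l : Filter ι) (An : ι → Set X) (A : Set X)
    (hAnc : ∀ i, IsClosed (An i)) (hAnne : ∀ i, (An i).Nonempty)
    (hAc : IsClosed A) (hAne : A.Nonempty)
    (hgap : ∀ S₀ ∈ B, ∀ α : ℝ, α < gapD S₀ A → ∀ᶠ i in l, α < gapD S₀ (An i)) :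
    ∀ S₀ ∈ B, ∀ ε > 0, ∀ᶠ i in l, An i ∩ S₀ ⊆ thickening ε A := by
  intro S₀ hS₀ ε hε
  set T : Set X := S₀ \ thickening ε A with hT
  rcases T.eq_empty_or_nonempty with hTe | hTne
  · -- S₀ ⊆ thickening ε A, trivial
    filter_upwards with i x hx
    by_contra hxA
    have : x ∈ T := ⟨hx.2, hxA⟩
    simp [hTe] at this
  · have hTB : T ∈ B := hered S₀ hS₀ T Set.diff_subset hTne
    have hgapT : (ε / 2 : ℝ) < gapD T A := by
      have hle : ε ≤ gapD T A := by
        apply le_csInf (hTne.image2 hAne)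
        rintro r ⟨s, hs, a, ha, rfl⟩
        have hsA : ε ≤ infDist s A := by
          by_contra h
          exact hs.2 (mem_thickening_iff_infDist_lt hAne |>.2 (lt_of_not_ge h))
        exact hsA.trans (infDist_le_dist_of_mem ha)
      linarith
    filter_upwards [hgap T hTB (ε / 2) hgapT] with i hi x hx
    by_contra hxA
    have hxT : x ∈ T := ⟨hx.2, hxA⟩
    have h0 : gapD T (An i) ≤ 0 := by
      have : dist x x ∈ Set.image2 dist T (An i) := Set.mem_image2_of_mem hxT hx.1
      have hb : BddBelow (Set.image2 dist T (An i)) :=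
        ⟨0, by rintro r ⟨s, _, a, _, rfl⟩; exact dist_nonneg⟩
      simpa [gapD] using csInf_le hb this
    linarith
end

section
/- Let (X,d) be a metric space and S a bornology on X. A net (A_λ) of nonempty closed sets τ⁺_{S,d}-converges to a nonempty closed set A if and only if the following miss condition holds: for every S₀ ∈ S and all positive functions f, g : X → (0,∞) with inf{g(x) − f(x) : x ∈ S₀} > 0, whenever A ∩ B_d(S₀,g) = ∅ then eventually A_λ ∩ B_d(S₀,f) = ∅. -/
open Metric Filter

/-- The `f`-enlargement of a set `S`: `⋃ x ∈ S, B(x, f x)`. -/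
def fEnl {X : Type*} [MetricSpace X] (S : Set X) (f : X → ℝ) : Set X :=
  ⋃ x ∈ S, ball x (f x)

lemma fEnl_empty_iff {X : Type*} [MetricSpace X] {S C : Set X} {f : X → ℝ} :
    C ∩ fEnl S f = ∅ ↔ ∀ x ∈ S, ∀ a ∈ C, f x ≤ dist x a := by
  simp only [Set.eq_empty_iff_forall_notMem, Set.mem_inter_iff, fEnl, Set.mem_iUnion,
    mem_ball, not_and, not_exists]
  constructor
  · intro h x hx a ha
    by_contra hlt
    exact h a ha x hx (by rw [dist_comm]; linarith)
  · intro h a ha x hx hd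
    have := h x hx a ha
    rw [dist_comm] at hd
    linarith

theorem tauPlus_iff_miss {X : Type*} [MetricSpace X]
    (B : Set (Set X))
    (hne : ∀ s ∈ B, s.Nonempty)
    (hcov : ∀ x : X, ∃ s ∈ B, x ∈ s)
    (hered : ∀ s ∈ B, ∀ t, t ⊆ s → t.Nonempty → t ∈ B)
    (hunion : ∀ s ∈ B, ∀ t ∈ B, s ∪ t ∈ B)
    {ι : Type*} (l : Filter ι) (An : ι → Set X) (A : Set X)
    (hAnc : ∀ i, IsClosed (An i)) (hAnne : ∀ i, (An i).Nonempty)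
    (hAc : IsClosed A) (hAne : A.Nonempty) :
    (∀ S₀ ∈ B, ∀ ε > 0, ∀ᶠ i in l, ∀ x ∈ S₀,
        infDist x A - infDist x (An i) < ε) ↔
    (∀ S₀ ∈ B, ∀ f g : X → ℝ, (∀ x, 0 < f x) → (∀ x, 0 < g x) →
        0 < sInf ((fun x => g x - f x) '' S₀) →
        A ∩ fEnl S₀ g = ∅ → ∀ᶠ i in l, An i ∩ fEnl S₀ f = ∅) := by
  constructor
  · intro h S₀ hS₀ f g hf hg hinf hmiss
    set δ := sInf ((fun x => g x - f x) '' S₀) with hδ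
    have hfg : ∀ x ∈ S₀, δ ≤ g x - f x := by
      intro x hx
      by_cases hb : BddBelow ((fun x => g x - f x) '' S₀)
      · exact csInf_le hb ⟨x, hx, rfl⟩
      · rw [hδ, Real.sInf_of_not_bddBelow hb] at hinf
        exact absurd hinf (lt_irrefl 0)
    have hA : ∀ x ∈ S₀, g x ≤ infDist x A := by
      intro x hx
      by_contra hlt
      push_neg at hlt
      obtain ⟨a, ha, hd⟩ := (infDist_lt_iff hAne).1 hlt
      exact absurd (fEnl_empty_iff.1 hmiss x hx a ha) (not_le.2 hd)
    filter_upwards [h S₀ hS₀ δ hinf] with i hi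
    rw [fEnl_empty_iff]
    intro x hx a ha
    have h1 : infDist x A - infDist x (An i) < δ := hi x hx
    have h2 : infDist x (An i) ≤ dist x a := infDist_le_dist_of_mem ha
    have := hA x hx
    have := hfg x hx
    linarith
  · intro h S₀ hS₀ ε hε
    set T := {x ∈ S₀ | ε ≤ infDist x A} with hT
    by_cases hTne : T.Nonempty
    · have hTB : T ∈ B := hered S₀ hS₀ T (fun x hx => hx.1) hTne
      set f : X → ℝ := fun x => max (infDist x A - ε / 2) (ε / 4) with hfdef
      set g : X → ℝ := fun x => max (infDist x A) (ε / 2) with hgdef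
      have hfpos : ∀ x, 0 < f x := fun x => lt_max_of_lt_right (by linarith)
      have hgpos : ∀ x, 0 < g x := fun x => lt_max_of_lt_right (by linarith)
      have hfT : ∀ x ∈ T, f x = infDist x A - ε / 2 := by
        intro x hx
        exact max_eq_left (by have := hx.2; linarith)
      have hgT : ∀ x ∈ T, g x = infDist x A := by
        intro x hx
        exact max_eq_left (by have := hx.2; linarith)
      have himg : (fun x => g x - f x) '' T = {ε / 2} := by
        apply Set.eq_singleton_iff_nonempty_unique_mem.2
        refine ⟨hTne.image _, ?_⟩
        rintro y ⟨x, hx, rfl⟩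
        show g x - f x = ε / 2
        rw [hfT x hx, hgT x hx]; ring
      have hinf : 0 < sInf ((fun x => g x - f x) '' T) := by
        rw [himg, csInf_singleton]; linarith
      have hmiss : A ∩ fEnl T g = ∅ := by
        rw [fEnl_empty_iff]
        intro x hx a ha
        rw [hgT x hx]
        exact infDist_le_dist_of_mem ha
      filter_upwards [h T hTB f g hfpos hgpos hinf hmiss] with i hi
      intro x hx
      by_cases hxT : x ∈ T
      · have hb : f x ≤ infDist x (An i) := by
          by_contra hlt
          push_neg at hlt
          obtain ⟨a, ha, hd⟩ := (infDist_lt_iff (hAnne i)).1 hlt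
          exact absurd (fEnl_empty_iff.1 hi x hxT a ha) (not_le.2 hd)
        rw [hfT x hxT] at hb
        linarith
      · have : infDist x A < ε := by
          by_contra hge
          exact hxT ⟨hx, not_lt.1 hge⟩
        have := infDist_nonneg (x := x) (s := An i)
        linarith
    · apply Eventually.of_forall
      intro i x hx
      have : infDist x A < ε := by
        by_contra hge
        exact hTne ⟨x, hx, not_lt.1 hge⟩
      have := infDist_nonneg (x := x) (s := An i)
      linarith
end

section
/- Let (X,d) be a metric space. A net (A_λ) of nonempty closed subsets converges to a nonempty closed set A in the upper Attouch–Wets topology (τ⁺_{AW_d}, i.e. τ⁺_{S,d} for S the bornology of bounded sets) if and only if: for every bounded set S₀ and all 0 < α < ε, whenever A ∩ B_d(S₀,ε) = ∅, then eventually A_λ ∩ B_d(S₀,α) = ∅. -/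
open Metric Filter

theorem upperAW_iff_miss {X : Type*} [MetricSpace X]
    {ι : Type*} (l : Filter ι) (An : ι → Set X) (A : Set X)
    (hAnc : ∀ i, IsClosed (An i)) (hAnne : ∀ i, (An i).Nonempty)
    (hAc : IsClosed A) (hAne : A.Nonempty) :
    (∀ S₀ : Set X, Bornology.IsBounded S₀ → ∀ ε > 0, ∀ᶠ i in l, ∀ x ∈ S₀,
        infDist x A - infDist x (An i) < ε) ↔
    (∀ S₀ : Set X, Bornology.IsBounded S₀ → ∀ α ε : ℝ, 0 < α → α < ε →
        A ∩ thickening ε S₀ = ∅ → ∀ᶠ i in l, An i ∩ thickening α S₀ = ∅) := by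
  constructor
  · intro h S₀ hb α ε hα hαε hmiss
    filter_upwards [h S₀ hb (ε - α) (by linarith)] with i hi
    rw [Set.eq_empty_iff_forall_notMem]
    rintro y ⟨hy, hyt⟩
    rcases Set.eq_empty_or_nonempty S₀ with rfl | hne
    · simp [thickening_empty] at hyt
    rw [mem_thickening_iff_infDist_lt hne] at hyt
    obtain ⟨x, hxS, hxy⟩ := (infDist_lt_iff hne).mp hyt
    have h1 : infDist x (An i) < α := lt_of_le_of_lt (infDist_le_dist_of_mem hy) (by
      rwa [dist_comm])
    have h2 : ε ≤ infDist x A := by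
      by_contra hlt
      push_neg at hlt
      obtain ⟨a, haA, hax⟩ := (infDist_lt_iff hAne).mp hlt
      have : a ∈ A ∩ thickening ε S₀ := ⟨haA,
        mem_thickening_iff_infDist_lt ⟨x, hxS⟩ |>.mpr
          (lt_of_le_of_lt (infDist_le_dist_of_mem hxS) (by rwa [dist_comm]))⟩
      rw [hmiss] at this
      exact this
    have := hi x hxS
    linarith
  · intro h S₀ hb ε hε
    obtain ⟨a₀, ha₀⟩ := hAne
    obtain ⟨R, hR⟩ := (Metric.isBounded_iff_subset_closedBall a₀).mp hb
    set c : ℝ := ε / 4 with hc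
    have hcpos : 0 < c := by positivity
    have hbound : ∀ x ∈ S₀, infDist x A ≤ R := fun x hx =>
      le_trans (infDist_le_dist_of_mem ha₀) (by simpa [dist_comm] using hR hx)
    obtain ⟨N, hN⟩ := exists_nat_gt (R / c)
    have hNc : R < N * c := by
      rw [div_lt_iff₀ hcpos] at hN; linarith
    set S : ℕ → Set X := fun k => {x ∈ S₀ | (k : ℝ) * c ≤ infDist x A} with hS
    have hmissA : ∀ k : ℕ, A ∩ thickening ((k : ℝ) * c) (S k) = ∅ := by
      intro k
      rw [Set.eq_empty_iff_forall_notMem]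
      rintro a ⟨haA, hat⟩
      rcases Set.eq_empty_or_nonempty (S k) with hSe | hSne
      · rw [hSe, thickening_empty] at hat; exact hat
      rw [mem_thickening_iff_infDist_lt hSne] at hat
      obtain ⟨x, hxS, hax⟩ := (infDist_lt_iff hSne).mp hat
      have : infDist x A ≤ dist x a := infDist_le_dist_of_mem haA
      rw [dist_comm] at hax
      have := hxS.2
      linarith
    have hev : ∀ k ∈ Finset.Icc 2 N, ∀ᶠ i in l,
        An i ∩ thickening ((k : ℝ) * c - c) (S k) = ∅ := by
      intro k hk
      rw [Finset.mem_Icc] at hk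
      have hk2 : (2 : ℝ) ≤ (k : ℝ) := by exact_mod_cast hk.1
      exact h (S k) (hb.subset (fun x hx => hx.1)) ((k : ℝ) * c - c) ((k : ℝ) * c)
        (by nlinarith) (by linarith) (hmissA k)
    filter_upwards [(Finset.Icc 2 N).eventually_all.mpr hev] with i hi x hx
    have hnn : 0 ≤ infDist x (An i) := infDist_nonneg
    by_cases hsmall : infDist x A < 2 * c
    · linarith
    push_neg at hsmall
    set k : ℕ := ⌊infDist x A / c⌋₊ with hk
    have hk2 : 2 ≤ k := by
      rw [hk, Nat.le_floor_iff (div_nonneg infDist_nonneg hcpos.le)]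
      rw [le_div_iff₀ hcpos]; push_cast; linarith
    have hkle : (k : ℝ) * c ≤ infDist x A := by
      rw [hk]
      have := Nat.floor_le (show (0:ℝ) ≤ infDist x A / c from div_nonneg infDist_nonneg hcpos.le)
      calc (⌊infDist x A / c⌋₊ : ℝ) * c ≤ (infDist x A / c) * c := by
            exact mul_le_mul_of_nonneg_right this hcpos.le
        _ = infDist x A := by field_simp
    have hklt : infDist x A < ((k : ℝ) + 1) * c := by
      have := Nat.lt_floor_add_one (infDist x A / c)
      rw [← hk] at this
      calc infDist x A = (infDist x A / c) * c := by field_simp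
        _ < ((k : ℝ) + 1) * c := by
            exact mul_lt_mul_of_pos_right this hcpos
    have hkN : k ≤ N := by
      by_contra hgt
      push_neg at hgt
      have : (N : ℝ) ≤ (k : ℝ) - 1 := by
        have : (N : ℝ) + 1 ≤ k := by exact_mod_cast hgt
        linarith
      have := hbound x hx
      nlinarith
    have hxSk : x ∈ S k := ⟨hx, hkle⟩
    have hemp := hi k (Finset.mem_Icc.mpr ⟨hk2, hkN⟩)
    have hlow : (k : ℝ) * c - c ≤ infDist x (An i) := by
      by_contra hlt
      push_neg at hlt
      obtain ⟨y, hyAn, hxy⟩ := (infDist_lt_iff (hAnne i)).mp hlt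
      have : y ∈ An i ∩ thickening ((k : ℝ) * c - c) (S k) := ⟨hyAn,
        mem_thickening_iff_infDist_lt ⟨x, hxSk⟩ |>.mpr
          (lt_of_le_of_lt (infDist_le_dist_of_mem hxSk) (by rwa [dist_comm]))⟩
      rw [hemp] at this
      exact this
    have : infDist x A - infDist x (An i) < 2 * c := by linarith
    linarith
end

section
/- Let (X,d) be a metric space. A net (A_λ) of nonempty closed subsets converges to a nonempty closed set A in the upper Wijsman topology (pointwise: for each x ∈ X and ε > 0, eventually d(x,A) − d(x,A_λ) < ε) if and only if: for all x ∈ X and 0 < α < ε, whenever A ∩ B_d(x,ε) = ∅, then eventually A_λ ∩ B_d(x,α) = ∅. -/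
open Metric Filter

theorem upperWijsman_iff_miss {X : Type*} [MetricSpace X]
    {ι : Type*} (l : Filter ι) (An : ι → Set X) (A : Set X)
    (hAnc : ∀ i, IsClosed (An i)) (hAnne : ∀ i, (An i).Nonempty)
    (hAc : IsClosed A) (hAne : A.Nonempty) :
    (∀ x : X, ∀ ε > 0, ∀ᶠ i in l, infDist x A - infDist x (An i) < ε) ↔
    (∀ x : X, ∀ α ε : ℝ, 0 < α → α < ε →
        A ∩ ball x ε = ∅ → ∀ᶠ i in l, An i ∩ ball x α = ∅) := by
  constructor
  · intro h x α ε hα hαε hmiss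
    have hεA : ε ≤ infDist x A := by
      by_contra h'
      push_neg at h'
      obtain ⟨y, hy, hdy⟩ := (infDist_lt_iff hAne).1 h'
      have : y ∈ A ∩ ball x ε := ⟨hy, by rwa [mem_ball, dist_comm]⟩
      simp [hmiss] at this
    filter_upwards [h x (ε - α) (by linarith)] with i hi
    have hinf : α < infDist x (An i) := by linarith
    ext y
    simp only [Set.mem_inter_iff, mem_ball, Set.mem_empty_iff_false, iff_false]
    rintro ⟨hy, hdy⟩
    have := infDist_le_dist_of_mem (x := x) hy
    rw [dist_comm] at hdy
    linarith
  · intro h x ε hε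
    set D := infDist x A with hD
    rcases le_or_gt D ε with hDε | hDε
    · rcases lt_or_ge D ε with h1 | h1
      · filter_upwards with i
        have := infDist_nonneg (x := x) (s := An i)
        linarith
      · have hDeq : D = ε := le_antisymm hDε h1
        have hmiss : A ∩ ball x D = ∅ := by
          ext y
          simp only [Set.mem_inter_iff, mem_ball, Set.mem_empty_iff_false, iff_false]
          rintro ⟨hy, hdy⟩
          have := infDist_le_dist_of_mem (x := x) hy
          rw [dist_comm] at hdy
          linarith
        filter_upwards [h x (D - ε/2) D (by linarith) (by linarith) hmiss] with i hi
        have : D - ε/2 ≤ infDist x (An i) := by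
          by_contra h'
          push_neg at h'
          obtain ⟨y, hy, hdy⟩ := (infDist_lt_iff (hAnne i)).1 h'
          have : y ∈ An i ∩ ball x (D - ε/2) := ⟨hy, by rwa [mem_ball, dist_comm]⟩
          simp [hi] at this
        linarith
    · have hmiss : A ∩ ball x D = ∅ := by
        ext y
        simp only [Set.mem_inter_iff, mem_ball, Set.mem_empty_iff_false, iff_false]
        rintro ⟨hy, hdy⟩
        have := infDist_le_dist_of_mem (x := x) hy
        rw [dist_comm] at hdy
        linarith
      filter_upwards [h x (D - ε/2) D (by linarith) (by linarith) hmiss] with i hi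
      have : D - ε/2 ≤ infDist x (An i) := by
        by_contra h'
        push_neg at h'
        obtain ⟨y, hy, hdy⟩ := (infDist_lt_iff (hAnne i)).1 h'
        have : y ∈ An i ∩ ball x (D - ε/2) := ⟨hy, by rwa [mem_ball, dist_comm]⟩
        simp [hi] at this
      linarith
end

section
/- Let (X,d) be a metric space and S a bornology on X such that for every S₀ ∈ S and every positive function f : X → (0,∞), either B_d(S₀,f) ∈ S or the closure of B_d(S₀,f) equals X. Then τ⁺_{S,d}-convergence and G⁺_{S,d}-convergence coincide on the nonempty closed subsets of X. -/
open Metric Filter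

private lemma le_infDist_aux {X : Type*} [MetricSpace X] {s : Set X} {x : X} {b : ℝ}
    (hs : s.Nonempty) (h : ∀ y ∈ s, b ≤ dist x y) : b ≤ infDist x s :=
  le_of_not_gt fun hl => by
    rcases (infDist_lt_iff hs).1 hl with ⟨y, hy, hd⟩
    exact absurd (h y hy) hd.not_ge

private lemma gapD_bddBelow {X : Type*} [MetricSpace X] (S A : Set X) :
    BddBelow (Set.image2 dist S A) :=
  ⟨0, by rintro r ⟨s, _, a, _, rfl⟩; exact dist_nonneg⟩

theorem tauPlus_eq_gapPlus_of_enlargement_condition {X : Type*} [MetricSpace X]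
    (B : Set (Set X))
    (hne : ∀ s ∈ B, s.Nonempty)
    (hcov : ∀ x : X, ∃ s ∈ B, x ∈ s)
    (hered : ∀ s ∈ B, ∀ t, t ⊆ s → t.Nonempty → t ∈ B)
    (hunion : ∀ s ∈ B, ∀ t ∈ B, s ∪ t ∈ B)
    (hcond : ∀ S₀ ∈ B, ∀ f : X → ℝ, (∀ x, 0 < f x) →
      fEnl S₀ f ∈ B ∨ closure (fEnl S₀ f) = Set.univ)
    {ι : Type*} (l : Filter ι) (An : ι → Set X) (A : Set X)
    (hAnc : ∀ i, IsClosed (An i)) (hAnne : ∀ i, (An i).Nonempty)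
    (hAc : IsClosed A) (hAne : A.Nonempty) :
    (∀ S₀ ∈ B, ∀ ε > 0, ∀ᶠ i in l, ∀ x ∈ S₀,
        infDist x A - infDist x (An i) < ε) ↔
    (∀ S₀ ∈ B, ∀ α : ℝ, α < gapD S₀ A → ∀ᶠ i in l, α < gapD S₀ (An i)) := by
  constructor
  · intro h S₀ hS₀ α hα
    rcases lt_or_ge α 0 with hα0 | hα0
    · filter_upwards with i
      refine lt_of_lt_of_le hα0 (Real.sInf_nonneg ?_)
      rintro r ⟨s, _, a, _, rfl⟩; exact dist_nonneg
    · set D := gapD S₀ A with hD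
      have hεpos : 0 < (D - α) / 2 := by linarith
      filter_upwards [h S₀ hS₀ ((D - α) / 2) hεpos] with i hi
      have hne₀ : (Set.image2 dist S₀ (An i)).Nonempty :=
        (hne S₀ hS₀).image2 (hAnne i)
      have : α + (D - α) / 2 ≤ gapD S₀ (An i) := by
        refine le_csInf hne₀ ?_
        rintro r ⟨s, hs, a, ha, rfl⟩
        have h1 : infDist s A - infDist s (An i) < (D - α) / 2 := hi s hs
        have h2 : D ≤ infDist s A := by
          refine le_infDist_aux hAne fun y hy => ?_
          exact csInf_le (gapD_bddBelow S₀ A) ⟨s, hs, y, hy, rfl⟩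
        have h3 : infDist s (An i) ≤ dist s a := infDist_le_dist_of_mem ha
        linarith
      linarith
  · intro h S₀ hS₀ ε hε
    by_cases hT : {x ∈ S₀ | ε ≤ infDist x A}.Nonempty
    · set T := {x ∈ S₀ | ε ≤ infDist x A} with hTdef
      have hTB : T ∈ B := hered S₀ hS₀ T (Set.sep_subset _ _) hT
      set f : X → ℝ := fun x => max (infDist x A - ε / 2) (ε / 2) with hfdef
      have hf : ∀ x, 0 < f x := fun x => lt_max_of_lt_right (by linarith)
      -- key: every point of the enlargement is at distance > ε/2 from A
      have key : ∀ y ∈ fEnl T f, ∀ a ∈ A, ε / 2 < dist y a := by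
        intro y hy a ha
        rcases Set.mem_iUnion₂.1 hy with ⟨x, hx, hxy⟩
        have hxA : ε ≤ infDist x A := hx.2
        have hfx : f x = infDist x A - ε / 2 := max_eq_left (by linarith)
        have h1 : infDist x A ≤ infDist y A + dist x y :=
          infDist_le_infDist_add_dist
        have h2 : infDist y A ≤ dist y a := infDist_le_dist_of_mem ha
        have h3 : dist x y < f x := mem_ball'.1 hxy
        rw [hfx] at h3
        linarith
      rcases hcond T hTB f hf with hE | hE
      · have h0 : (0 : ℝ) < gapD (fEnl T f) A := by
          have hEne : (fEnl T f).Nonempty := by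
            obtain ⟨x, hx⟩ := hT
            exact ⟨x, Set.mem_biUnion hx (mem_ball_self (hf x))⟩
          have : ε / 2 ≤ gapD (fEnl T f) A := by
            refine le_csInf (hEne.image2 hAne) ?_
            rintro r ⟨y, hy, a, ha, rfl⟩
            exact (key y hy a ha).le
          linarith
        filter_upwards [h _ hE 0 h0] with i hi
        intro x hx
        by_contra hcon
        push_neg at hcon
        have hnn : 0 ≤ infDist x (An i) := infDist_nonneg
        have hxA : ε ≤ infDist x A := by linarith
        have hxT : x ∈ T := ⟨hx, hxA⟩
        have hlt : infDist x (An i) < infDist x A - ε / 2 := by linarith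
        rcases (infDist_lt_iff (hAnne i)).1 hlt with ⟨a, haAn, hda⟩
        have haE : a ∈ fEnl T f := by
          refine Set.mem_biUnion hxT ?_
          rw [mem_ball']
          calc dist x a < infDist x A - ε / 2 := hda
            _ ≤ f x := le_max_left _ _
        have hle : gapD (fEnl T f) (An i) ≤ 0 := by
          have := csInf_le (gapD_bddBelow (fEnl T f) (An i)) ⟨a, haE, a, haAn, rfl⟩
          simpa [gapD] using this
        linarith
      · exfalso
        obtain ⟨a, ha⟩ := hAne
        have haC : a ∈ closure (fEnl T f) := hE ▸ Set.mem_univ a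
        rcases Metric.mem_closure_iff.1 haC (ε / 2) (by linarith) with ⟨y, hy, hd⟩
        have := key y hy a ha
        rw [dist_comm] at this
        linarith
    · filter_upwards with i x hx
      have h1 : infDist x A < ε := lt_of_not_ge fun hh => hT ⟨x, hx, hh⟩
      have h2 : 0 ≤ infDist x (An i) := infDist_nonneg
      linarith
end

section
/- Let (X,d) be a metric space and S a bornology on X. A net (A_λ) of nonempty subsets S⁺-converges to a nonempty set A if and only if: for every S₀ ∈ S and ε > 0, whenever A ∩ B_d(S₀,ε) = ∅, then eventually A_λ ∩ S₀ = ∅. -/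
open Metric Filter

theorem bornPlus_iff_miss {X : Type*} [MetricSpace X]
    (B : Set (Set X))
    (hne : ∀ s ∈ B, s.Nonempty)
    (hcov : ∀ x : X, ∃ s ∈ B, x ∈ s)
    (hered : ∀ s ∈ B, ∀ t, t ⊆ s → t.Nonempty → t ∈ B)
    (hunion : ∀ s ∈ B, ∀ t ∈ B, s ∪ t ∈ B)
    {ι : Type*} (l : Filter ι) (An : ι → Set X) (A : Set X)
    (hAnne : ∀ i, (An i).Nonempty) (hAne : A.Nonempty) :
    (∀ S₀ ∈ B, ∀ ε > 0, ∀ᶠ i in l, An i ∩ S₀ ⊆ thickening ε A) ↔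
    (∀ S₀ ∈ B, ∀ ε > 0, A ∩ thickening ε S₀ = ∅ → ∀ᶠ i in l, An i ∩ S₀ = ∅) := by
  constructor
  · intro h S₀ hS₀ ε hε hdisj
    filter_upwards [h S₀ hS₀ ε hε] with i hi
    rw [Set.eq_empty_iff_forall_notMem]
    rintro x hx
    obtain ⟨a, ha, hd⟩ := mem_thickening_iff.mp (hi hx)
    have : a ∈ A ∩ thickening ε S₀ :=
      ⟨ha, mem_thickening_iff.mpr ⟨x, hx.2, by rwa [dist_comm]⟩⟩
    rw [hdisj] at this
    exact this
  · intro h S₀ hS₀ ε hε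
    by_cases hsub : S₀ ⊆ thickening ε A
    · exact Eventually.of_forall fun i => (Set.inter_subset_right).trans hsub
    · set S₁ := S₀ \ thickening ε A with hS₁def
      have hS₁ne : S₁.Nonempty := by
        rw [Set.nonempty_iff_ne_empty]
        intro hemp
        exact hsub (Set.diff_eq_empty.mp hemp)
      have hS₁B : S₁ ∈ B := hered S₀ hS₀ S₁ Set.diff_subset hS₁ne
      have hdisj : A ∩ thickening ε S₁ = ∅ := by
        rw [Set.eq_empty_iff_forall_notMem]
        rintro a ⟨haA, hath⟩
        obtain ⟨x, hx, hd⟩ := mem_thickening_iff.mp hath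
        exact hx.2 (mem_thickening_iff.mpr ⟨a, haA, by rwa [dist_comm]⟩)
      filter_upwards [h S₁ hS₁B ε hε hdisj] with i hi
      intro x hx
      by_contra hxA
      have : x ∈ An i ∩ S₁ := ⟨hx.1, hx.2, hxA⟩
      rw [hi] at this
      exact this
end

section
/- Let (X,d) be a metric space and S a bornology on X that is stable under small enlargements (for each S₀ ∈ S there is ε > 0 with B_d(S₀,ε) ∈ S). Then every S⁺-convergent net of nonempty sets is μ⁺⁺_S-convergent: if (A_λ) S⁺-converges to A, then for each S₀ ∈ S with D_d(S₀,A) > 0, eventually there is δ > 0 with S₀ ∩ B_d(A_λ,δ) = ∅. -/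
open Metric Filter

theorem bornPlus_implies_muPlusPlus_of_stable {X : Type*} [MetricSpace X]
    (B : Set (Set X))
    (hne : ∀ s ∈ B, s.Nonempty)
    (hcov : ∀ x : X, ∃ s ∈ B, x ∈ s)
    (hered : ∀ s ∈ B, ∀ t, t ⊆ s → t.Nonempty → t ∈ B)
    (hunion : ∀ s ∈ B, ∀ t ∈ B, s ∪ t ∈ B)
    (hstable : ∀ S₀ ∈ B, ∃ ε > 0, thickening ε S₀ ∈ B)
    {ι : Type*} (l : Filter ι) (An : ι → Set X) (A : Set X)
    (hAnne : ∀ i, (An i).Nonempty) (hAne : A.Nonempty)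
    (hborn : ∀ S₀ ∈ B, ∀ ε > 0, ∀ᶠ i in l, An i ∩ S₀ ⊆ thickening ε A) :
    ∀ S₀ ∈ B, (∃ ε > 0, S₀ ∩ thickening ε A = ∅) →
      ∀ᶠ i in l, ∃ δ > 0, S₀ ∩ thickening δ (An i) = ∅ := by
  intro S₀ hS₀ ⟨ε, hε, hdisj⟩
  obtain ⟨ε₁, hε₁, hthick⟩ := hstable S₀ hS₀
  have h2 : (0:ℝ) < ε / 2 := by linarith
  filter_upwards [hborn _ hthick (ε / 2) h2] with i hi
  refine ⟨min ε₁ (ε / 2), by positivity, ?_⟩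
  ext x
  simp only [Set.mem_inter_iff, Set.mem_empty_iff_false, iff_false, not_and]
  intro hxS₀ hx
  rw [Metric.mem_thickening_iff] at hx
  obtain ⟨a, haAn, hda⟩ := hx
  have ha1 : a ∈ thickening ε₁ S₀ := by
    rw [Metric.mem_thickening_iff]
    exact ⟨x, hxS₀, by rw [dist_comm]; exact hda.trans_le (min_le_left _ _)⟩
  have := hi ⟨haAn, ha1⟩
  rw [Metric.mem_thickening_iff] at this
  obtain ⟨y, hyA, hdy⟩ := this
  have hxA : x ∈ thickening ε A := by
    rw [Metric.mem_thickening_iff]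
    refine ⟨y, hyA, ?_⟩
    calc dist x y ≤ dist x a + dist a y := dist_triangle _ _ _
      _ < ε / 2 + ε / 2 := by
          have := hda.trans_le (min_le_right _ _); linarith
      _ = ε := by ring
  exact absurd (Set.mem_inter hxS₀ hxA) (by rw [hdisj]; exact id)
end

section
/- Let (X,d) be a metric space and S a bornology on X such that for every S₀ ∈ S and all positive functions f, g : X → (0,∞) with inf{g(x) − f(x) : x ∈ S₀} > 0, either B_d(S₀,f) ∈ S or B_d(S₀,g) = X. Then every S⁺-convergent net of nonempty closed sets is τ⁺_{S,d}-convergent to the same limit. -/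
open Metric Filter

theorem bornPlus_implies_tauPlus_of_condition {X : Type*} [MetricSpace X]
    (B : Set (Set X))
    (hne : ∀ s ∈ B, s.Nonempty)
    (hcov : ∀ x : X, ∃ s ∈ B, x ∈ s)
    (hered : ∀ s ∈ B, ∀ t, t ⊆ s → t.Nonempty → t ∈ B)
    (hunion : ∀ s ∈ B, ∀ t ∈ B, s ∪ t ∈ B)
    (hcond : ∀ S₀ ∈ B, ∀ f g : X → ℝ, (∀ x, 0 < f x) → (∀ x, 0 < g x) →
      0 < sInf ((fun x => g x - f x) '' S₀) →
      fEnl S₀ f ∈ B ∨ fEnl S₀ g = Set.univ)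
    {ι : Type*} (l : Filter ι) (An : ι → Set X) (A : Set X)
    (hAnc : ∀ i, IsClosed (An i)) (hAnne : ∀ i, (An i).Nonempty)
    (hAc : IsClosed A) (hAne : A.Nonempty)
    (hborn : ∀ S₀ ∈ B, ∀ ε > 0, ∀ᶠ i in l, An i ∩ S₀ ⊆ thickening ε A) :
    ∀ S₀ ∈ B, ∀ ε > 0, ∀ᶠ i in l, ∀ x ∈ S₀,
      infDist x A - infDist x (An i) < ε := by
  intro S₀ hS₀ ε hε
  set S' : Set X := {x ∈ S₀ | ε ≤ infDist x A} with hS'def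
  by_cases hS' : S'.Nonempty
  · -- the "far" part of S₀ is nonempty
    have hS'B : S' ∈ B := hered S₀ hS₀ S' (fun x hx => hx.1) hS'
    set f : X → ℝ := fun x => max (infDist x A - 3 * ε / 4) (ε / 4) with hfdef
    set g : X → ℝ := fun x => f x + ε / 4 with hgdef
    have hfpos : ∀ x, 0 < f x := fun x => lt_max_of_lt_right (by linarith)
    have hgpos : ∀ x, 0 < g x := fun x => by have := hfpos x; simp only [hgdef]; linarith
    have himg : ((fun x => g x - f x) '' S') = {ε / 4} := by
      apply Set.eq_singleton_iff_nonempty_unique_mem.2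
      constructor
      · exact ⟨_, Set.mem_image_of_mem _ hS'.some_mem⟩
      · rintro y ⟨x, _, rfl⟩
        simp [hgdef]
    have hpos : 0 < sInf ((fun x => g x - f x) '' S') := by
      rw [himg, csInf_singleton]; linarith
    rcases hcond S' hS'B f g hfpos hgpos hpos with hT | huniv
    · -- the f-enlargement is in B : use hborn on it
      have hb := hborn _ hT (ε / 8) (by linarith)
      filter_upwards [hb] with i hi x hx
      by_cases hxS' : ε ≤ infDist x A
      · -- show the gap is at most 3ε/4
        by_contra hcon
        push_neg at hcon
        have hlt : infDist x (An i) < infDist x A - 3 * ε / 4 := by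
          by_contra h'
          push_neg at h'
          linarith
        obtain ⟨a, haAn, hax⟩ := (infDist_lt_iff (hAnne i)).1 hlt
        have haT : a ∈ fEnl S' f := by
          apply Set.mem_biUnion (show x ∈ S' from ⟨hx, hxS'⟩)
          rw [mem_ball, dist_comm]
          exact lt_of_lt_of_le hax (le_max_left _ _)
        have hthick : a ∈ thickening (ε / 8) A := hi ⟨haAn, haT⟩
        rw [mem_thickening_iff_infDist_lt hAne] at hthick
        have h1 : infDist x A ≤ infDist a A + dist x a := infDist_le_infDist_add_dist
        linarith
      · push_neg at hxS'
        have := infDist_nonneg (s := An i) (x := x)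
        linarith
    · -- the g-enlargement is the whole space : impossible
      exfalso
      obtain ⟨a₀, ha₀⟩ := hAne
      have : a₀ ∈ fEnl S' g := by rw [huniv]; trivial
      rw [fEnl, Set.mem_iUnion₂] at this
      obtain ⟨y, hy, hball⟩ := this
      have h1 : infDist y A ≤ dist y a₀ := infDist_le_dist_of_mem ha₀
      have h2 : ε ≤ infDist y A := hy.2
      have h3 : g y = infDist y A - ε / 2 := by
        have : f y = infDist y A - 3 * ε / 4 := max_eq_left (by linarith)
        show f y + ε / 4 = _
        rw [this]; ring
      rw [mem_ball, h3, dist_comm] at hball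
      linarith
  · -- all of S₀ is within ε of A : trivial
    apply Filter.Eventually.of_forall
    intro i x hx
    have h1 : ¬ ε ≤ infDist x A := fun h => hS' ⟨x, hx, h⟩
    push_neg at h1
    have := infDist_nonneg (s := An i) (x := x)
    linarith
end

section
/- Let (X,d) be an unbounded metric space and S a bornology on X such that τ⁺_{S,d}-convergence coincides with S⁺-convergence on nonempty closed sets. Then S is stable under enlargements: for every S₀ ∈ S and r > 0, B_d(S₀,r) ∈ S (where, if X itself arises as such an enlargement, note X ∈ S since then S = P₀(X)). -/
open Metric Filter

lemma mem_fEnl {X : Type*} [MetricSpace X] {S : Set X} {f : X → ℝ} {z : X} :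
    z ∈ fEnl S f ↔ ∃ x ∈ S, dist z x < f x := by
  simp [fEnl, Set.mem_iUnion, mem_ball]

lemma exists_far {X : Type*} [MetricSpace X]
    (h : ¬ Bornology.IsBounded (Set.univ : Set X)) (y : X) (R : ℝ) :
    ∃ z : X, R < dist z y := by
  by_contra hc
  push_neg at hc
  exact h ((isBounded_closedBall (x := y) (r := R)).subset fun z _ => hc z)

theorem stable_under_enlargements_of_coincidence {X : Type*} [MetricSpace X]
    (hunb : ¬ Bornology.IsBounded (Set.univ : Set X))
    (B : Set (Set X))
    (hne : ∀ s ∈ B, s.Nonempty)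
    (hcov : ∀ x : X, ∃ s ∈ B, x ∈ s)
    (hered : ∀ s ∈ B, ∀ t, t ⊆ s → t.Nonempty → t ∈ B)
    (hunion : ∀ s ∈ B, ∀ t ∈ B, s ∪ t ∈ B)
    -- the consequence of the coincidence `τ⁺_{S,d} = S⁺` (Theorem):
    (hcoin : ∀ S₀ ∈ B, ∀ f g : X → ℝ, (∀ x, 0 < f x) → (∀ x, 0 < g x) →
      0 < sInf ((fun x => g x - f x) '' S₀) →
      fEnl S₀ f ∈ B ∨ fEnl S₀ g = Set.univ) :
    ∀ S₀ ∈ B, ∀ r > 0, thickening r S₀ ∈ B := by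
  intro S₀ hS₀ r hr
  have hS₀ne : S₀.Nonempty := hne S₀ hS₀
  have hEnlconst : ∀ c : ℝ, fEnl S₀ (fun _ => c) = thickening c S₀ := by
    intro c
    rw [thickening_eq_biUnion_ball]
    rfl
  by_cases hcase : ∃ y : X, ∀ x ∈ S₀, r + 1 ≤ dist y x
  · obtain ⟨y, hy⟩ := hcase
    have hinf : 0 < sInf ((fun x => (r + 1/2) - r) '' S₀) := by
      have : (fun _ : X => (r + 1/2) - r) = fun _ : X => (1/2 : ℝ) := by
        funext x; ring
      rw [this, hS₀ne.image_const, csInf_singleton]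
      norm_num
    rcases hcoin S₀ hS₀ (fun _ => r) (fun _ => r + 1/2) (fun _ => hr)
        (fun _ => by linarith) hinf with h | h
    · rwa [hEnlconst r] at h
    · exfalso
      have hy' : y ∈ fEnl S₀ (fun _ => r + 1/2) := h ▸ Set.mem_univ y
      obtain ⟨x, hxS, hxd⟩ := mem_fEnl.mp hy'
      have h2 := hy x hxS
      linarith
  · push_neg at hcase
    set ρ := r + 1 with hρ
    have hρpos : (1 : ℝ) < ρ := by simp [hρ]; linarith
    -- every "co-ball" of radius 2ρ+3 is in B
    have hK : ∀ y : X, {z : X | 2*ρ + 3 < dist z y} ∈ B := by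
      intro y
      set T := {x ∈ S₀ | 1 ≤ dist x y} with hT
      -- T is nonempty
      obtain ⟨z, hz⟩ := exists_far hunb y (2*ρ + 3)
      have hzx : ∀ z : X, 2*ρ + 3 < dist z y → ∃ x ∈ T, dist z x < ρ ∧ ρ + 2 < dist x y := by
        intro z hz
        obtain ⟨x, hxS, hxd⟩ := hcase z
        have hd : ρ + 2 < dist x y := by
          have htri : dist z y ≤ dist z x + dist x y := dist_triangle z x y
          linarith
        exact ⟨x, ⟨hxS, by linarith⟩, hxd, hd⟩
      obtain ⟨x₀, hx₀T, _, _⟩ := hzx z hz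
      have hTne : T.Nonempty := ⟨x₀, hx₀T⟩
      have hTB : T ∈ B := hered S₀ hS₀ T (Set.sep_subset _ _) hTne
      set f : X → ℝ := fun x => max (dist x y - 1) (1/2) with hf
      have hfpos : ∀ x, 0 < f x := fun x => lt_of_lt_of_le (by norm_num) (le_max_right _ _)
      have hgpos : ∀ x, 0 < f x + 1/4 := fun x => by have := hfpos x; linarith
      have hinf : 0 < sInf ((fun x => (f x + 1/4) - f x) '' T) := by
        have : (fun x : X => (f x + 1/4) - f x) = fun _ : X => (1/4 : ℝ) := by
          funext x; ring
        rw [this, hTne.image_const, csInf_singleton]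
        norm_num
      rcases hcoin T hTB f (fun x => f x + 1/4) hfpos hgpos hinf with h | h
      · refine hered _ h _ ?_ ⟨z, hz⟩
        intro w hw
        obtain ⟨x, hxT, hwx, hxy⟩ := hzx w hw
        refine mem_fEnl.mpr ⟨x, hxT, ?_⟩
        have : dist x y - 1 ≤ f x := le_max_left _ _
        linarith
      · exfalso
        have hy' : y ∈ fEnl T (fun x => f x + 1/4) := h ▸ Set.mem_univ y
        obtain ⟨x, hxT, hxd⟩ := mem_fEnl.mp hy'
        have hx1 : 1 ≤ dist x y := hxT.2
        rw [dist_comm] at hxd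
        rcases le_or_gt (1/2 : ℝ) (dist x y - 1) with hc | hc
        · have : f x = dist x y - 1 := max_eq_left hc
          rw [this] at hxd; linarith
        · have : f x = 1/2 := max_eq_right (le_of_lt hc)
          rw [this] at hxd; linarith
    -- two far-apart co-balls cover X
    obtain ⟨y₁, hy₁S⟩ := hS₀ne
    obtain ⟨y₂, hy₂⟩ := exists_far hunb y₁ (4*ρ + 6)
    have huniv : {z : X | 2*ρ + 3 < dist z y₁} ∪ {z : X | 2*ρ + 3 < dist z y₂} = Set.univ := by
      ext w
      simp only [Set.mem_union, Set.mem_setOf_eq, Set.mem_univ, iff_true]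
      by_contra hcon
      push_neg at hcon
      obtain ⟨h1, h2⟩ := hcon
      have : dist y₂ y₁ ≤ dist y₂ w + dist w y₁ := dist_triangle _ _ _
      rw [dist_comm y₂ w] at this
      linarith
    have hU : (Set.univ : Set X) ∈ B := huniv ▸ hunion _ (hK y₁) _ (hK y₂)
    refine hered _ hU _ (Set.subset_univ _) ?_
    exact ⟨y₁, self_subset_thickening hr S₀ hy₁S⟩
end

section
/- Let (X,d) be a metric space and S a bornology on X with every member of S totally bounded (S ⊆ TB_d(X)). Then τ⁺_{S,d}-convergence coincides with upper Wijsman convergence on nonempty closed sets: a net (A_λ) satisfies, for each S₀ ∈ S and ε > 0, eventually sup_{x∈S₀}(d(x,A) − d(x,A_λ)) < ε, if and only if for each x ∈ X and ε > 0, eventually d(x,A) − d(x,A_λ) < ε. -/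
open Metric Filter

theorem tauPlus_eq_upperWijsman_of_totallyBounded {X : Type*} [MetricSpace X]
    (B : Set (Set X))
    (hne : ∀ s ∈ B, s.Nonempty)
    (hcov : ∀ x : X, ∃ s ∈ B, x ∈ s)
    (hered : ∀ s ∈ B, ∀ t, t ⊆ s → t.Nonempty → t ∈ B)
    (hunion : ∀ s ∈ B, ∀ t ∈ B, s ∪ t ∈ B)
    (htb : ∀ s ∈ B, TotallyBounded s)
    {ι : Type*} (l : Filter ι) (An : ι → Set X) (A : Set X)
    (hAnc : ∀ i, IsClosed (An i)) (hAnne : ∀ i, (An i).Nonempty)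
    (hAc : IsClosed A) (hAne : A.Nonempty) :
    (∀ S₀ ∈ B, ∀ ε > 0, ∀ᶠ i in l, ∀ x ∈ S₀,
        infDist x A - infDist x (An i) < ε) ↔
    (∀ x : X, ∀ ε > 0, ∀ᶠ i in l, infDist x A - infDist x (An i) < ε) := by
  constructor
  · intro h x ε hε
    obtain ⟨s, hs, hxs⟩ := hcov x
    have hsing : ({x} : Set X) ∈ B :=
      hered s hs {x} (Set.singleton_subset_iff.mpr hxs) ⟨x, rfl⟩
    filter_upwards [h {x} hsing ε hε] with i hi
    exact hi x rfl
  · intro h S₀ hS₀ ε hε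
    obtain ⟨F, hFfin, hFcov⟩ :=
      (Metric.totallyBounded_iff.mp (htb S₀ hS₀)) (ε / 3) (by linarith)
    have hev : ∀ᶠ i in l, ∀ f ∈ F, infDist f A - infDist f (An i) < ε / 3 := by
      rw [eventually_all_finite hFfin]
      intro f _
      exact h f (ε / 3) (by linarith)
    filter_upwards [hev] with i hi x hx
    obtain ⟨f, hfF, hxf⟩ := Set.mem_iUnion₂.mp (hFcov hx)
    have hxf' : dist x f < ε / 3 := mem_ball.mp hxf
    have h1 : infDist x A ≤ infDist f A + dist x f := infDist_le_infDist_add_dist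
    have h2 : infDist f (An i) ≤ infDist x (An i) + dist f x :=
      infDist_le_infDist_add_dist
    have h3 := hi f hfF
    rw [dist_comm] at h2
    linarith
end

section
/- Let (X,d) be a metric space. Then K(X)⁺-convergence (upper bornological convergence with respect to the bornology of nonempty relatively compact sets) implies upper Wijsman convergence on nonempty closed sets if and only if (X,d) has nice closed balls, i.e., every closed ball that is a proper subset of X is compact. -/
open Metric Filter

lemma aux_finite_mem_compact {X : Type*} [MetricSpace X] (u : ℕ → X)
    (hu : ∀ (a : X) (φ : ℕ → ℕ), StrictMono φ → ¬ Tendsto (u ∘ φ) atTop (nhds a))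
    {K : Set X} (hK : IsCompact K) : {k | u k ∈ K}.Finite := by
  by_contra hinf
  obtain ⟨φ, hφ, hmem⟩ := extraction_of_frequently_atTop
    (Nat.frequently_atTop_iff_infinite.2 hinf)
  obtain ⟨a, -, ψ, hψ, hlim⟩ := hK.tendsto_subseq (x := u ∘ φ) hmem
  exact hu a (φ ∘ ψ) (hφ.comp hψ) hlim

lemma aux_closed_of_finite_inter {X : Type*} [MetricSpace X] {s : Set X}
    (h : ∀ K : Set X, IsCompact K → (s ∩ K).Finite) : IsClosed s := by
  refine IsSeqClosed.isClosed ?_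
  intro v z hv hvz
  have hK : IsCompact (insert z (Set.range v)) := hvz.isCompact_insert_range
  have hfin : (s ∩ insert z (Set.range v)).Finite := h _ hK
  have hsub : Set.range v ⊆ s ∩ insert z (Set.range v) := by
    rintro _ ⟨n, rfl⟩; exact ⟨hv n, Set.mem_insert_of_mem _ ⟨n, rfl⟩⟩
  have hz : z ∈ closure (Set.range v) :=
    mem_closure_of_tendsto hvz (Eventually.of_forall fun n => ⟨n, rfl⟩)
  have := (closure_mono hsub).trans_eq hfin.isClosed.closure_eq
  exact (this hz).1

theorem compactPlus_implies_upperWijsman_iff_niceClosedBalls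
    {X : Type u} [MetricSpace X] :
    (∀ (ι : Type u) (l : Filter ι) (An : ι → Set X) (A : Set X),
      (∀ i, IsClosed (An i)) → (∀ i, (An i).Nonempty) →
      IsClosed A → A.Nonempty →
      (∀ S₀ : Set X, S₀.Nonempty → IsCompact (closure S₀) →
        ∀ ε > 0, ∀ᶠ i in l, An i ∩ S₀ ⊆ thickening ε A) →
      (∀ x : X, ∀ ε > 0, ∀ᶠ i in l, infDist x A - infDist x (An i) < ε)) ↔
    (∀ (x : X) (r : ℝ), closedBall x r ≠ Set.univ → IsCompact (closedBall x r)) := by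
  constructor
  · -- contrapositive: non-compact proper ball gives a counterexample
    intro H x r hproper
    by_contra hnc
    have hne : (closedBall x r).Nonempty := by
      rcases Set.eq_empty_or_nonempty (closedBall x r) with h | h
      · exact absurd (h ▸ isCompact_empty) hnc
      · exact h
    have hnsc : ¬ IsSeqCompact (closedBall x r) := fun h => hnc h.isCompact
    rw [IsSeqCompact] at hnsc
    push_neg at hnsc
    obtain ⟨u, humem, hu⟩ := hnsc
    have hu' : ∀ (a : X) (φ : ℕ → ℕ), StrictMono φ → ¬ Tendsto (u ∘ φ) atTop (nhds a) := by
      intro a φ hφ hlim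
      have ha : a ∈ closedBall x r :=
        isClosed_closedBall.mem_of_tendsto hlim (Eventually.of_forall fun n => humem _)
      exact hu a ha φ hφ hlim
    obtain ⟨p, hp⟩ : ∃ p, p ∉ closedBall x r := by
      by_contra h; push_neg at h
      exact hproper (Set.eq_univ_of_forall h)
    have hpd : r < dist x p := by
      by_contra h; push_neg at h
      exact hp (mem_closedBall'.2 h)
    set An : ULift.{u} ℕ → Set X := fun i => insert p (u '' Set.Ici i.down) with hAn
    have hAncl : ∀ i, IsClosed (An i) := by
      intro i
      refine aux_closed_of_finite_inter fun K hK => ?_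
      have hsub : An i ∩ K ⊆ insert p (u '' {k | u k ∈ K}) := by
        rintro z ⟨hz1, hz2⟩
        rcases hz1 with rfl | ⟨k, -, rfl⟩
        · exact Set.mem_insert _ _
        · exact Set.mem_insert_of_mem _ ⟨k, hz2, rfl⟩
      exact Set.Finite.subset (((aux_finite_mem_compact u hu' hK).image u).insert p) hsub
    have hKhyp : ∀ S₀ : Set X, S₀.Nonempty → IsCompact (closure S₀) →
        ∀ ε > 0, ∀ᶠ i in Filter.map ULift.up atTop, An i ∩ S₀ ⊆ thickening ε {p} := by
      intro S₀ hS₀ hS₀c ε hε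
      rw [eventually_map]
      obtain ⟨N, hN⟩ := (aux_finite_mem_compact u hu' hS₀c).bddAbove
      filter_upwards [eventually_gt_atTop N] with n hn
      rintro z ⟨hz1, hz2⟩
      rcases hz1 with rfl | ⟨k, hk, rfl⟩
      · exact self_subset_thickening hε _ rfl
      · exact absurd (hN (subset_closure hz2)) (lt_of_lt_of_le hn hk).not_ge
    have hkey := H (ULift.{u} ℕ) (Filter.map ULift.up atTop) An {p}
      hAncl (fun i => ⟨p, Set.mem_insert _ _⟩) isClosed_singleton ⟨p, rfl⟩
      hKhyp x (dist x p - r) (by linarith)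
    rw [eventually_map] at hkey
    rcases hkey.exists with ⟨n, hn⟩
    have h1 : infDist x ({p} : Set X) = dist x p := infDist_singleton
    have h2 : infDist x (An (ULift.up n)) ≤ r := by
      have hmem : u n ∈ An (ULift.up n) := Set.mem_insert_of_mem _ ⟨n, le_refl n, rfl⟩
      exact le_trans (infDist_le_dist_of_mem hmem) (mem_closedBall'.1 (humem n))
    rw [h1] at hn; linarith
  · -- nice closed balls implies the implication
    intro h ι l An A hAncl hAnne hAcl hAne hK x ε hε
    rcases lt_or_ge (infDist x A) ε with hlt | hge
    · exact Eventually.of_forall fun i =>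
        lt_of_le_of_lt (by linarith [infDist_nonneg (x := x) (s := An i)]) hlt
    · have hproper : closedBall x (infDist x A - ε/2) ≠ Set.univ := by
        intro huniv
        obtain ⟨a, ha⟩ := hAne
        have h1 : dist x a ≤ infDist x A - ε/2 := by
          have : a ∈ closedBall x (infDist x A - ε/2) := huniv ▸ Set.mem_univ a
          exact mem_closedBall'.1 this
        have h2 : infDist x A ≤ dist x a := infDist_le_dist_of_mem ha
        linarith
      have hcpt := h x (infDist x A - ε/2) hproper
      have hclos : IsCompact (closure (closedBall x (infDist x A - ε/2))) := by
        rwa [isClosed_closedBall.closure_eq]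
      have hball_ne : (closedBall x (infDist x A - ε/2)).Nonempty :=
        ⟨x, mem_closedBall_self (by linarith)⟩
      filter_upwards [hK _ hball_ne hclos (ε/4) (by linarith)] with i hi
      have hempty : ∀ y ∈ An i, ¬ dist x y < infDist x A - ε/2 := by
        intro y hy hlt'
        have hyS : y ∈ closedBall x (infDist x A - ε/2) := mem_closedBall'.2 hlt'.le
        obtain ⟨a, ha, hda⟩ := mem_thickening_iff.1 (hi ⟨hy, hyS⟩)
        have h1 : infDist x A ≤ dist x a := infDist_le_dist_of_mem ha
        have h2 : dist x a ≤ dist x y + dist y a := dist_triangle _ _ _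
        linarith
      have hge' : infDist x A - ε/2 ≤ infDist x (An i) := by
        by_contra hlt'
        push_neg at hlt'
        obtain ⟨y, hy, hdy⟩ := (infDist_lt_iff (hAnne i)).1 hlt'
        exact hempty y hy hdy
      linarith
end

section
/- Let (X,d) be a metric space. Then TB_d(X)⁺-convergence (upper bornological convergence with respect to the bornology of nonempty totally bounded sets) implies upper Wijsman convergence on nonempty closed sets if and only if every proper closed ball in (X,d) is totally bounded. -/
open Metric Filter

/-- From a non-totally-bounded set we can extract an ε-separated sequence. -/
lemma exists_separated_seq_of_not_totallyBounded {X : Type*} [MetricSpace X] {s : Set X}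
    (h : ¬ TotallyBounded s) :
    ∃ ε > 0, ∃ w : ℕ → X, (∀ n, w n ∈ s) ∧ ∀ m n, m ≠ n → ε ≤ dist (w m) (w n) := by
  classical
  rw [Metric.totallyBounded_iff] at h
  push_neg at h
  obtain ⟨ε, εpos, hε⟩ := h
  have key : ∀ t : Finset X, ∃ x ∈ s, ∀ y ∈ t, ε ≤ dist x y := by
    intro t
    have := hε (↑t : Set X) t.finite_toSet
    rw [Set.not_subset] at this
    obtain ⟨x, hxs, hx⟩ := this
    refine ⟨x, hxs, fun y hy => ?_⟩
    by_contra hlt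
    push_neg at hlt
    exact hx (Set.mem_biUnion hy (Metric.mem_ball.mpr hlt))
  choose F hFs hFd using key
  let g : ℕ → Finset X := fun n => Nat.rec ∅ (fun _ t => insert (F t) t) n
  have hg : ∀ n, g (n + 1) = insert (F (g n)) (g n) := fun n => rfl
  set w : ℕ → X := fun n => F (g n) with hw
  have hmem : ∀ m n, m < n → w m ∈ g n := by
    intro m n hmn
    induction n with
    | zero => omega
    | succ k ih =>
      rw [hg]
      rcases Nat.lt_succ_iff_lt_or_eq.mp hmn with h' | h'
      · exact Finset.mem_insert_of_mem (ih h')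
      · subst h'; exact Finset.mem_insert_self _ _
  refine ⟨ε, εpos, w, fun n => hFs _, ?_⟩
  intro m n hmn
  rcases Nat.lt_or_ge m n with h' | h'
  · rw [dist_comm]
    exact hFd (g n) (w m) (hmem m n h')
  · have h'' : n < m := lt_of_le_of_ne h' (Ne.symm hmn)
    exact hFd (g m) (w n) (hmem n m h'')

/-- An ε-separated set is closed. -/
lemma isClosed_of_separated {X : Type*} [MetricSpace X] {ε : ℝ} (hε : 0 < ε) {t : Set X}
    (h : ∀ a ∈ t, ∀ b ∈ t, a ≠ b → ε ≤ dist a b) : IsClosed t := by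
  refine isClosed_of_closure_subset fun y hy => ?_
  obtain ⟨a, ha, hya⟩ := Metric.mem_closure_iff.mp hy (ε / 2) (by linarith)
  by_cases hy0 : y = a
  · exact hy0 ▸ ha
  have hdpos : 0 < dist y a := dist_pos.mpr hy0
  obtain ⟨b, hb, hyb⟩ := Metric.mem_closure_iff.mp hy (min (ε / 2) (dist y a))
    (lt_min (by linarith) hdpos)
  have hba : b ≠ a := by
    intro hba
    rw [hba] at hyb
    exact absurd (lt_min_iff.mp hyb).2 (lt_irrefl _)
  have : ε ≤ dist a b := h a ha b hb (Ne.symm hba)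
  have : dist a b ≤ dist a y + dist y b := dist_triangle a y b
  have h1 : dist a y < ε / 2 := by rw [dist_comm]; exact hya
  have h2 : dist y b < ε / 2 := lt_of_lt_of_le hyb (min_le_left _ _)
  linarith [h a ha b hb (Ne.symm hba)]

/-- Only finitely many terms of a separated sequence lie in a totally bounded set. -/
lemma exists_bound_of_separated_totallyBounded {X : Type*} [MetricSpace X] {ε : ℝ}
    (hε : 0 < ε) {w : ℕ → X} (hsep : ∀ m n, m ≠ n → ε ≤ dist (w m) (w n))
    {S : Set X} (hS : TotallyBounded S) : ∃ N, ∀ m ≥ N, w m ∉ S := by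
  obtain ⟨t, tfin, hsub⟩ := Metric.totallyBounded_iff.mp hS (ε / 2) (by linarith)
  have hfin : {m : ℕ | w m ∈ S}.Finite := by
    have hcover : {m : ℕ | w m ∈ S} ⊆ ⋃ y ∈ t, {m : ℕ | w m ∈ ball y (ε / 2)} := by
      intro m hm
      obtain ⟨y, hy, hball⟩ := Set.mem_iUnion₂.mp (hsub hm)
      exact Set.mem_biUnion hy hball
    refine Set.Finite.subset (Set.Finite.biUnion tfin fun y _ => ?_) hcover
    refine Set.Subsingleton.finite fun m hm n hn => ?_
    by_contra hmn
    have h1 : dist (w m) y < ε / 2 := Metric.mem_ball.mp hm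
    have h2 : dist (w n) y < ε / 2 := Metric.mem_ball.mp hn
    have : dist (w m) (w n) ≤ dist (w m) y + dist y (w n) := dist_triangle _ _ _
    have h2' : dist y (w n) < ε / 2 := by rw [dist_comm]; exact h2
    have := hsep m n hmn
    linarith
  obtain ⟨N, hN⟩ := hfin.bddAbove
  refine ⟨N + 1, fun m hm hmS => ?_⟩
  have := hN hmS
  omega

theorem tbPlus_implies_upperWijsman_iff_properBalls_totallyBounded
    {X : Type u} [MetricSpace X] :
    (∀ (ι : Type u) (l : Filter ι) (An : ι → Set X) (A : Set X),
      (∀ i, IsClosed (An i)) → (∀ i, (An i).Nonempty) →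
      IsClosed A → A.Nonempty →
      (∀ S₀ : Set X, S₀.Nonempty → TotallyBounded S₀ →
        ∀ ε > 0, ∀ᶠ i in l, An i ∩ S₀ ⊆ thickening ε A) →
      (∀ x : X, ∀ ε > 0, ∀ᶠ i in l, infDist x A - infDist x (An i) < ε)) ↔
    (∀ (x : X) (r : ℝ), closedBall x r ≠ Set.univ → TotallyBounded (closedBall x r)) := by
  constructor
  · -- forward: contrapositive construction
    intro H x r hproper
    by_contra hTB
    obtain ⟨ε, εpos, w, hws, hsep⟩ := exists_separated_seq_of_not_totallyBounded hTB
    have hp' : ∃ p, p ∉ closedBall x r := by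
      by_contra h
      push_neg at h
      exact hproper (Set.eq_univ_of_forall h)
    obtain ⟨p, hp⟩ := hp'
    have hpr : r < dist x p := by
      rw [Metric.mem_closedBall, not_le, dist_comm] at hp
      exact hp
    set A : Set X := {p} with hA
    set An : ULift.{u} ℕ → Set X := fun i => insert p (w '' {m | i.down ≤ m}) with hAn
    have hAncl : ∀ i, IsClosed (An i) := by
      intro i
      rw [hAn]
      simp only []
      rw [Set.insert_eq]
      refine IsClosed.union isClosed_singleton (isClosed_of_separated εpos ?_)
      rintro a ⟨m, _, rfl⟩ b ⟨n, _, rfl⟩ hab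
      exact hsep m n (fun h => hab (by rw [h]))
    have key := H (ULift.{u} ℕ) (Filter.map ULift.up Filter.atTop) An A hAncl
      (fun i => ⟨p, Set.mem_insert _ _⟩) isClosed_singleton ⟨p, rfl⟩ ?_
    · have h2 := key x (dist x p - r) (by linarith)
      rw [Filter.eventually_map, Filter.eventually_atTop] at h2
      obtain ⟨N, hN⟩ := h2
      have h3 := hN N le_rfl
      have hAd : infDist x A = dist x p := Metric.infDist_singleton
      have hle : infDist x (An (ULift.up N)) ≤ r := by
        have hmem : w N ∈ An (ULift.up N) :=
          Set.mem_insert_of_mem _ ⟨N, by simp, rfl⟩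
        calc infDist x (An (ULift.up N)) ≤ dist x (w N) :=
              Metric.infDist_le_dist_of_mem hmem
          _ ≤ r := by
              have := hws N
              rw [Metric.mem_closedBall] at this
              rw [dist_comm]; exact this
      rw [hAd] at h3
      linarith
    · intro S₀ _ hS₀ ε' hε'
      obtain ⟨N, hNS⟩ := exists_bound_of_separated_totallyBounded εpos hsep hS₀
      rw [Filter.eventually_map, Filter.eventually_atTop]
      refine ⟨N, fun n hn z hz => ?_⟩
      rcases Set.mem_insert_iff.mp hz.1 with rfl | ⟨m, hm, rfl⟩
      · exact Metric.self_subset_thickening hε' A rfl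
      · exact absurd hz.2 (hNS m (le_trans hn hm))
  · -- backward
    intro hball ι l An A _ hne _ hAne hTB x ε hε
    by_cases hs : infDist x A - ε / 2 < 0
    · refine Filter.Eventually.of_forall fun i => ?_
      have := Metric.infDist_nonneg (x := x) (s := An i)
      linarith
    · push_neg at hs
      have hxs : x ∈ closedBall x (infDist x A - ε / 2) := Metric.mem_closedBall_self hs
      have hproper : closedBall x (infDist x A - ε / 2) ≠ Set.univ := by
        intro huniv
        obtain ⟨a, ha⟩ := hAne
        have haB : a ∈ closedBall x (infDist x A - ε / 2) := huniv ▸ Set.mem_univ a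
        rw [Metric.mem_closedBall] at haB
        have h1 : infDist x A ≤ dist x a := Metric.infDist_le_dist_of_mem ha
        rw [dist_comm] at h1
        linarith
      have hStb := hball x (infDist x A - ε / 2) hproper
      have hev := hTB (closedBall x (infDist x A - ε / 2)) ⟨x, hxs⟩ hStb (ε / 4) (by linarith)
      filter_upwards [hev] with i hi
      have hlow : infDist x A - ε / 2 ≤ infDist x (An i) := by
        by_contra hlt
        push_neg at hlt
        obtain ⟨a, haAn, hax⟩ := (Metric.infDist_lt_iff (hne i)).mp hlt
        have haB : a ∈ closedBall x (infDist x A - ε / 2) := by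
          rw [Metric.mem_closedBall, dist_comm]; exact le_of_lt hax
        have hthick := hi ⟨haAn, haB⟩
        obtain ⟨b, hbA, hab⟩ := Metric.mem_thickening_iff.mp hthick
        have h1 : infDist x A ≤ dist x b := Metric.infDist_le_dist_of_mem hbA
        have h2 : dist x b ≤ dist x a + dist a b := dist_triangle _ _ _
        linarith
      linarith
end

section
/- Let (X,d) be a metric space. A net (A_λ) of nonempty closed sets converges to a nonempty closed set A in the upper Attouch–Wets sense (for each bounded S₀ and ε > 0, eventually d(x,A) − d(x,A_λ) < ε for all x ∈ S₀) if and only if it B_d(X)⁺-converges to A (for each bounded S₀ and ε > 0, eventually A_λ ∩ S₀ ⊆ B_d(A,ε)). -/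
open Metric Filter

theorem upperAW_iff_boundedBornPlus {X : Type*} [MetricSpace X]
    {ι : Type*} (l : Filter ι) (An : ι → Set X) (A : Set X)
    (hAnc : ∀ i, IsClosed (An i)) (hAnne : ∀ i, (An i).Nonempty)
    (hAc : IsClosed A) (hAne : A.Nonempty) :
    (∀ S₀ : Set X, Bornology.IsBounded S₀ → ∀ ε > 0, ∀ᶠ i in l, ∀ x ∈ S₀,
        infDist x A - infDist x (An i) < ε) ↔
    (∀ S₀ : Set X, Bornology.IsBounded S₀ → ∀ ε > 0, ∀ᶠ i in l,
        An i ∩ S₀ ⊆ thickening ε A) := by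
  constructor
  · intro h S₀ hS₀ ε hε
    filter_upwards [h S₀ hS₀ ε hε] with i hi x hx
    have h0 : infDist x (An i) = 0 := infDist_zero_of_mem hx.1
    have := hi x hx.2
    rw [h0, sub_zero] at this
    exact (mem_thickening_iff_infDist_lt hAne).2 this
  · intro h S₀ hS₀ ε hε
    obtain ⟨a₀, ha₀⟩ := hAne
    obtain ⟨R, hR⟩ := (Metric.isBounded_iff_subset_closedBall a₀).1 hS₀
    have hT : Bornology.IsBounded (closedBall a₀ (R + R + 1)) := isBounded_closedBall
    filter_upwards [h _ hT (ε / 2) (by linarith)] with i hi x hx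
    by_cases hc : infDist x A ≤ infDist x (An i)
    · linarith
    push_neg at hc
    have hxa₀ : dist x a₀ ≤ R := by simpa using hR hx
    have hxr : infDist x A ≤ R := le_trans (infDist_le_dist_of_mem ha₀) hxa₀
    have hδpos : (0:ℝ) < min (ε / 2) 1 := lt_min (by linarith) one_pos
    obtain ⟨a, haAn, hda⟩ := (infDist_lt_iff (hAnne i)).1
      (lt_add_of_pos_right _ hδpos : infDist x (An i) < infDist x (An i) + min (ε / 2) 1)
    have hmin1 : min (ε / 2) 1 ≤ 1 := min_le_right _ _
    have hmin2 : min (ε / 2) 1 ≤ ε / 2 := min_le_left _ _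
    have hlt : infDist x (An i) < R := hc.trans_le hxr
    have haT : a ∈ closedBall a₀ (R + R + 1) := by
      have hax : dist a x < R + 1 := by
        rw [dist_comm]; linarith
      simp only [mem_closedBall]
      calc dist a a₀ ≤ dist a x + dist x a₀ := dist_triangle _ _ _
        _ ≤ R + R + 1 := by linarith
    have haA : infDist a A < ε / 2 :=
      (mem_thickening_iff_infDist_lt ⟨a₀, ha₀⟩).1 (hi ⟨haAn, haT⟩)
    have hle : infDist x A ≤ infDist a A + dist x a := infDist_le_infDist_add_dist
    linarith
end

section
/- Let (X,d) be an almost convex metric space and S a bornology on X such that for every S₀ ∈ S and positive functions f, g with inf_{x∈S₀}(g(x) − f(x)) > 0, either B_d(S₀,f) ∈ S or B_d(S₀,g) = X. Then for every S₀ ∈ S and every positive function f : X → (0,∞), either B_d(S₀,f) ∈ S or the closure of B_d(S₀,f) is X. -/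
open Metric Filter

theorem almostConvex_enlargement_dichotomy {X : Type*} [MetricSpace X]
    (hac : ∀ (A : Set X), A.Nonempty → ∀ ε r : ℝ, 0 < ε → 0 < r →
      thickening r (thickening ε A) = thickening (ε + r) A)
    (B : Set (Set X))
    (hne : ∀ s ∈ B, s.Nonempty)
    (hcov : ∀ x : X, ∃ s ∈ B, x ∈ s)
    (hered : ∀ s ∈ B, ∀ t, t ⊆ s → t.Nonempty → t ∈ B)
    (hunion : ∀ s ∈ B, ∀ t ∈ B, s ∪ t ∈ B)
    (hcond : ∀ S₀ ∈ B, ∀ f g : X → ℝ, (∀ x, 0 < f x) → (∀ x, 0 < g x) →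
      0 < sInf ((fun x => g x - f x) '' S₀) →
      fEnl S₀ f ∈ B ∨ fEnl S₀ g = Set.univ) :
    ∀ S₀ ∈ B, ∀ f : X → ℝ, (∀ x, 0 < f x) →
      fEnl S₀ f ∈ B ∨ closure (fEnl S₀ f) = Set.univ := by
  intro S₀ hS₀ f hf
  have key : ∀ ε : ℝ, 0 < ε →
      fEnl S₀ f ∈ B ∨ fEnl S₀ (fun x => f x + ε) = Set.univ := by
    intro ε hε
    apply hcond S₀ hS₀ f (fun x => f x + ε) hf
      (fun x => by have := hf x; linarith)
    have himg : (fun x => (fun x => f x + ε) x - f x) '' S₀ = {ε} := by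
      obtain ⟨x₀, hx₀⟩ := hne S₀ hS₀
      apply Set.eq_singleton_iff_nonempty_unique_mem.mpr
      exact ⟨⟨ε, ⟨x₀, hx₀, by ring⟩⟩, by rintro y ⟨x, -, rfl⟩; ring⟩
    rw [himg, csInf_singleton]
    exact hε
  by_cases h : fEnl S₀ f ∈ B
  · exact Or.inl h
  · right
    have huniv : ∀ ε : ℝ, 0 < ε → fEnl S₀ (fun x => f x + ε) = Set.univ := by
      intro ε hε
      rcases key ε hε with h' | h'
      · exact absurd h' h
      · exact h'
    have hsub : ∀ ε : ℝ, 0 < ε →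
        fEnl S₀ (fun x => f x + ε) ⊆ thickening ε (fEnl S₀ f) := by
      intro ε hε y hy
      simp only [fEnl, Set.mem_iUnion] at hy
      obtain ⟨x, hx, hyx⟩ := hy
      have h1 : thickening ε (thickening (f x) ({x} : Set X))
          = thickening (f x + ε) {x} := hac {x} ⟨x, rfl⟩ (f x) ε (hf x) hε
      have h2 : y ∈ thickening ε (thickening (f x) ({x} : Set X)) := by
        rw [h1, thickening_singleton]
        exact hyx
      rw [thickening_singleton] at h2
      refine thickening_subset_of_subset ε ?_ h2
      exact Set.subset_iUnion₂ (s := fun x _ => ball x (f x)) x hx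
    apply Set.eq_univ_of_forall
    intro y
    rw [EMetric.mem_closure_iff_infEdist_zero]
    have hlt : ∀ ε : ℝ, 0 < ε →
        EMetric.infEdist y (fEnl S₀ f) < ENNReal.ofReal ε := by
      intro ε hε
      have hy : y ∈ thickening ε (fEnl S₀ f) :=
        hsub ε hε (by rw [huniv ε hε]; trivial)
      exact mem_thickening_iff_infEdist_lt.mp hy
    by_contra h0
    obtain ⟨ε, hε, hεle⟩ : ∃ ε : ℝ, 0 < ε ∧
        ENNReal.ofReal ε ≤ EMetric.infEdist y (fEnl S₀ f) := by
      rcases eq_or_ne (EMetric.infEdist y (fEnl S₀ f)) ⊤ with ht | ht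
      · exact ⟨1, one_pos, ht ▸ le_top⟩
      · refine ⟨(EMetric.infEdist y (fEnl S₀ f)).toReal, ENNReal.toReal_pos h0 ht, ?_⟩
        rw [ENNReal.ofReal_toReal ht]
    exact absurd (hlt ε hε) (not_lt.mpr hεle)
end
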